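/- Let A be a finite set and B ⊆ A a subset. Let k be an integer with 0 < k < |A| and let γ be a real with 0 < γ ≤ 1. Then the number of k-element subsets S of A satisfying |S ∩ B| < (1 − γ)·(|B|/|A|)·k, divided by the total number C(|A|, k) of k-element subsets of A, is strictly less than exp(−γ² · (|B|/|A|) · (k/2)). -/

import Mathlib

open Finset

lemma pow_add_lower (u d : ℝ) (hu : 0 ≤ u) (hd : 0 ≤ d) :
    ∀ j : ℕ, u ^ (j + 1) + (j + 1 : ℝ) * u ^ j * d ≤ (u + d) ^ (j + 1) := by
  intro j
  induction j with
  | zero => simp [pow_succ]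
  | succ j ih =>
    have h2 : (u ^ (j + 1) + (j + 1 : ℝ) * u ^ j * d) * (u + d) ≤ (u + d) ^ (j + 1) * (u + d) :=
      mul_le_mul_of_nonneg_right ih (by linarith)
    have h3 : (0:ℝ) ≤ (j + 1 : ℝ) * u ^ j * d ^ 2 := by positivity
    have g1 : u ^ (j + 1) = u ^ j * u := pow_succ u j
    have g2 : u ^ (j + 1 + 1) = u ^ j * u * u := by rw [pow_succ, pow_succ]
    have g3 : (u + d) ^ (j + 1 + 1) = (u + d) ^ (j + 1) * (u + d) := pow_succ _ _
    push_cast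
    rw [g2, g3, g1]
    rw [g1] at h2
    nlinarith [h2, h3]

lemma exp_neg_lt_quadratic {x : ℝ} (hx : 0 < x) :
    Real.exp (-x) < 1 - x + x ^ 2 / 2 := by
  have key : StrictMonoOn (fun y : ℝ => 1 - y + y ^ 2 / 2 - Real.exp (-y)) (Set.Ici 0) := by
    apply strictMonoOn_of_deriv_pos (convex_Ici 0)
    · fun_prop
    · intro y hy
      rw [interior_Ici] at hy
      have hexp : HasDerivAt (fun y : ℝ => Real.exp (-y)) (Real.exp (-y) * (-1)) y :=
        (Real.hasDerivAt_exp (-y)).comp y (hasDerivAt_neg y)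
      have h1 : HasDerivAt (fun y : ℝ => 1 - y + y ^ 2 / 2 - Real.exp (-y))
          (0 - 1 + (2 * y ^ 1 * 1) / 2 - Real.exp (-y) * (-1)) y :=
        ((((hasDerivAt_const y (1:ℝ)).sub (hasDerivAt_id y)).add
          (((hasDerivAt_id y).pow 2).div_const 2)).sub hexp)
      rw [h1.deriv]
      have hyne : -y ≠ 0 := neg_ne_zero.mpr (ne_of_gt hy)
      have h2 := Real.add_one_lt_exp hyne
      simp only [pow_one, mul_one, id] at *
      nlinarith
  have := key (Set.mem_Ici.mpr le_rfl) (Set.mem_Ici.mpr hx.le) hx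
  simp [Real.exp_zero] at this
  linarith

lemma key_genfun (z : ℝ) (hz0 : 0 ≤ z) (hz1 : z ≤ 1) :
    ∀ (n m k : ℕ), m ≤ n →
    ∑ i ∈ Finset.range (k+1), (m.choose i : ℝ) * ((n-m).choose (k-i) : ℝ) * z ^ i
      ≤ (n.choose k : ℝ) * ((((n-m : ℕ) : ℝ) + (m : ℝ) * z) / (n : ℝ)) ^ k := by
  intro n
  induction n with
  | zero =>
    intro m k hm
    have hm0 : m = 0 := Nat.le_zero.mp hm
    subst hm0
    match k with
    | 0 => simp
    | j + 1 =>
      rw [Finset.sum_eq_zero]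
      · simp
      · intro i hi
        match i with
        | 0 => simp
        | i + 1 => simp [Nat.choose_eq_zero_of_lt (Nat.succ_pos i)]
  | succ n IH =>
    intro m k hm
    rcases Nat.eq_zero_or_pos m with hm0 | hm1
    · subst hm0
      rw [Finset.sum_eq_single 0]
      · rw [Nat.sub_zero, Nat.sub_zero]
        have hne : ((n+1:ℕ):ℝ) ≠ 0 := Nat.cast_ne_zero.mpr (Nat.succ_ne_zero n)
        simp only [Nat.choose_zero_right, Nat.cast_one, one_mul, Nat.cast_zero, zero_mul,
          add_zero, pow_zero, mul_one, Nat.sub_zero]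
        rw [div_self hne]
        simp
      · intro i hi hne
        match i, hne with
        | i + 1, _ => simp [Nat.choose_eq_zero_of_lt (Nat.succ_pos i)]
      · intro h; exact absurd (Finset.mem_range.mpr (Nat.succ_pos k)) h
    rcases eq_or_lt_of_le hm with hmn | hmn
    · -- m = n + 1
      subst hmn
      rw [Finset.sum_eq_single k]
      · have hne : ((n:ℝ)+1) ≠ 0 := by positivity
        simp only [Nat.sub_self, Nat.choose_zero_right, Nat.cast_one, mul_one, Nat.cast_zero]
        push_cast
        rw [zero_add, mul_div_cancel_left₀ _ hne]
      · intro i hi hne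
        have hik : i < k := by
          have := Finset.mem_range.mp hi; omega
        have : (0:ℕ) < k - i := by omega
        simp [Nat.sub_self, Nat.choose_eq_zero_of_lt this]
      · intro h; exact absurd (Finset.mem_range.mpr (Nat.lt_succ_self k)) h
    -- now 1 ≤ m ≤ n
    have hm' : m ≤ n := by omega
    match k with
    | 0 => simp
    | j + 1 =>
      have hsub : n + 1 - m = (n - m) + 1 := by omega
      have hrec : ∑ i ∈ Finset.range (j+1+1), (m.choose i : ℝ) * ((n+1-m).choose (j+1-i) : ℝ) * z ^ i
          = (∑ i ∈ Finset.range (j+1+1), (m.choose i : ℝ) * ((n-m).choose (j+1-i) : ℝ) * z ^ i)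
          + (∑ i ∈ Finset.range (j+1), (m.choose i : ℝ) * ((n-m).choose (j-i) : ℝ) * z ^ i) := by
        rw [Finset.sum_range_succ, Finset.sum_range_succ
          (fun i => (m.choose i : ℝ) * ((n-m).choose (j+1-i) : ℝ) * z ^ i)]
        have hterm : ∀ i ∈ Finset.range (j+1),
            (m.choose i : ℝ) * ((n+1-m).choose (j+1-i) : ℝ) * z ^ i
            = (m.choose i : ℝ) * ((n-m).choose (j+1-i) : ℝ) * z ^ i
              + (m.choose i : ℝ) * ((n-m).choose (j-i) : ℝ) * z ^ i := by
          intro i hi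
          have hij : i ≤ j := Nat.lt_succ_iff.mp (Finset.mem_range.mp hi)
          have h1 : j + 1 - i = (j - i) + 1 := by omega
          rw [hsub, h1, Nat.choose_succ_succ]
          push_cast
          ring
        rw [Finset.sum_congr rfl hterm, Finset.sum_add_distrib]
        have h0 : j + 1 - (j+1) = 0 := by omega
        rw [h0, hsub]
        simp
        ring
      rw [hrec]
      have IH1 := IH m (j+1) hm'
      have IH2 := IH m j hm'
      set u : ℝ := (((n - m : ℕ):ℝ) + (m:ℝ) * z) / (n:ℝ) with hu
      clear_value u
      have hstep : (n.choose (j+1) : ℝ) * u^(j+1) + (n.choose j : ℝ) * u^j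
          ≤ ((n+1).choose (j+1) : ℝ) * ((((n+1-m : ℕ):ℝ) + (m:ℝ)*z) / ((n:ℝ)+1))^(j+1) := by
        have hn0 : (0:ℝ) < (n:ℝ) := by
          have h1n : 1 ≤ n := le_trans hm1 hm'
          exact_mod_cast Nat.lt_of_lt_of_le Nat.zero_lt_one h1n
        set d : ℝ := ((m:ℝ)*(1-z))/((n:ℝ)*((n:ℝ)+1)) with hd0
        have hd : 0 ≤ d := by
          apply div_nonneg
          · exact mul_nonneg (Nat.cast_nonneg m) (by linarith)
          · positivity
        have hcast1 : ((n - m : ℕ):ℝ) = (n:ℝ) - (m:ℝ) := Nat.cast_sub hm'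
        have hcast2 : ((n + 1 - m : ℕ):ℝ) = (n:ℝ) + 1 - (m:ℝ) := by
          rw [hsub]
          push_cast [hcast1]
          ring
        have hu0 : 0 ≤ u := by
          rw [hu]
          apply div_nonneg _ hn0.le
          have h1 : (0:ℝ) ≤ ((n - m : ℕ):ℝ) := Nat.cast_nonneg _
          have h2 : (0:ℝ) ≤ (m:ℝ)*z := mul_nonneg (Nat.cast_nonneg m) hz0
          linarith
        have hveq : ((((n+1-m : ℕ):ℝ) + (m:ℝ)*z) / ((n:ℝ)+1)) = u + d := by
          rw [hcast2, hu, hcast1, hd0]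
          field_simp
          ring
        have h1u : 1 - u = ((n:ℝ)+1)*d := by
          rw [hu, hcast1, hd0]
          field_simp
          ring
        have hb := pow_add_lower u d hu0 hd j
        have hpascal : (((n+1).choose (j+1)) : ℝ) = (n.choose j : ℝ) + (n.choose (j+1) : ℝ) := by
          exact_mod_cast congrArg (Nat.cast : ℕ → ℝ) (Nat.choose_succ_succ' n j)
        have hcmul : ((n:ℝ)+1) * (n.choose j : ℝ) = (((n+1).choose (j+1)) : ℝ) * ((j:ℝ)+1) := by
          exact_mod_cast congrArg (Nat.cast : ℕ → ℝ) (Nat.add_one_mul_choose_eq n j)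
        have heq : (n.choose (j+1) : ℝ) * u^(j+1) + (n.choose j : ℝ) * u^j
            = (((n+1).choose (j+1)) : ℝ) * (u^(j+1) + ((j:ℝ)+1) * u^j * d) := by
          linear_combination (-(u ^ (j+1))) * hpascal + (u ^ j * d) * hcmul
            + ((n.choose j : ℝ) * u ^ j) * h1u
        rw [heq, hveq]
        exact mul_le_mul_of_nonneg_left hb (Nat.cast_nonneg _)
      calc _ ≤ (n.choose (j+1) : ℝ) * u^(j+1) + (n.choose j : ℝ) * u^j := add_le_add IH1 IH2
        _ ≤ _ := by
            simp only [Nat.cast_add, Nat.cast_one] at hstep ⊢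
            exact hstep

lemma count_le {V : Type*} [DecidableEq V] (A B : Finset V) (hBA : B ⊆ A) (k i : ℕ) :
    ((A.powersetCard k).filter (fun S => (S ∩ B).card = i)).card
      ≤ B.card.choose i * (A \ B).card.choose (k - i) := by
  have h := Finset.card_le_card_of_injOn
    (s := (A.powersetCard k).filter (fun S => (S ∩ B).card = i))
    (t := (B.powersetCard i) ×ˢ ((A \ B).powersetCard (k - i)))
    (fun S => (S ∩ B, S \ B)) ?_ ?_
  · simpa [Finset.card_product, Finset.card_powersetCard] using h
  · intro S hS
    simp only [Finset.mem_coe, Finset.mem_filter, Finset.mem_powersetCard] at hS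
    obtain ⟨⟨hSA, hSk⟩, hSi⟩ := hS
    simp only [Finset.mem_coe, Finset.mem_product, Finset.mem_powersetCard]
    refine ⟨⟨Finset.inter_subset_right, hSi⟩, Finset.sdiff_subset_sdiff hSA (Finset.Subset.refl _), ?_⟩
    have := Finset.card_sdiff_add_card_inter S B
    omega
  · intro S₁ h₁ S₂ h₂ he
    obtain ⟨e1, e2⟩ := Prod.mk.inj he
    have r1 : S₁ ∩ B ∪ S₁ \ B = S₁ := by
      ext a; simp only [Finset.mem_union, Finset.mem_inter, Finset.mem_sdiff]; tauto
    have r2 : S₂ ∩ B ∪ S₂ \ B = S₂ := by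
      ext a; simp only [Finset.mem_union, Finset.mem_inter, Finset.mem_sdiff]; tauto
    rw [← r1, ← r2, e1, e2]

theorem hypergeometric_lower_tail {V : Type*} [DecidableEq V]
    (A B : Finset V) (hBA : B ⊆ A) (k : ℕ) (hk0 : 0 < k) (hk : k < A.card)
    (γ : ℝ) (hγ0 : 0 < γ) (hγ1 : γ ≤ 1) :
    (((A.powersetCard k).filter
        (fun S => ((S ∩ B).card : ℝ) < (1 - γ) * ((B.card : ℝ) / A.card) * k)).card : ℝ)
        / (A.card.choose k : ℝ)
      < Real.exp (-(γ ^ 2 * ((B.card : ℝ) / A.card) * (k / 2))) := by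
  classical
  set n := A.card with hn
  set m := B.card with hm
  have hmn : m ≤ n := Finset.card_le_card hBA
  have hn0 : 0 < n := lt_of_le_of_lt (Nat.zero_le k) hk
  set p : ℝ := (m : ℝ) / (n : ℝ) with hp
  set t : ℝ := (1 - γ) * p * (k : ℝ) with ht
  have hCpos : (0:ℝ) < (n.choose k : ℝ) := by
    exact_mod_cast Nat.choose_pos (le_of_lt hk)
  rcases Nat.eq_zero_or_pos m with hm0 | hm1
  · -- B is empty : the filter is empty
    have ht0 : t = 0 := by rw [ht, hp, hm0]; simp
    have hempty : (A.powersetCard k).filter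
        (fun S => ((S ∩ B).card : ℝ) < t) = ∅ := by
      apply Finset.filter_false_of_mem
      intro S _
      rw [ht0]
      push_neg
      positivity
    rw [hempty]
    simp only [Finset.card_empty, Nat.cast_zero, zero_div]
    exact Real.exp_pos _
  -- main case : m ≥ 1
  have hp0 : 0 < p := by
    rw [hp]
    apply div_pos
    · exact_mod_cast hm1
    · exact_mod_cast hn0
  set z : ℝ := Real.exp (-γ) with hz
  have hz0 : 0 ≤ z := (Real.exp_pos _).le
  have hz1 : z ≤ 1 := by
    rw [hz, Real.exp_le_one_iff]
    linarith
  set F := (A.powersetCard k).filter (fun S => ((S ∩ B).card : ℝ) < t) with hF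
  set I : Finset ℕ := (Finset.range (k+1)).filter (fun i : ℕ => (i : ℝ) < t) with hI
  have hfib : F.card = ∑ i ∈ I, (F.filter (fun S => (S ∩ B).card = i)).card := by
    apply Finset.card_eq_sum_card_fiberwise (f := fun S => (S ∩ B).card)
    intro S hS
    rw [hF] at hS
    simp only [Finset.mem_coe, Finset.mem_filter, Finset.mem_powersetCard] at hS
    rw [hI]
    simp only [Finset.mem_coe, Finset.mem_filter, Finset.mem_range]
    obtain ⟨⟨hSA, hSk⟩, hφ⟩ := hS
    constructor
    · have h2 : (S ∩ B).card ≤ S.card := Finset.card_le_card Finset.inter_subset_left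
      omega
    · exact hφ
  have hAB : (A \ B).card = n - m := Finset.card_sdiff_of_subset hBA
  have hfibbd : ∀ i, (F.filter (fun S => (S ∩ B).card = i)).card
      ≤ m.choose i * (n-m).choose (k-i) := by
    intro i
    have hsub : F.filter (fun S => (S ∩ B).card = i) ⊆
        (A.powersetCard k).filter (fun S => (S ∩ B).card = i) := by
      intro S hS
      rw [hF] at hS
      simp only [Finset.mem_filter] at hS ⊢
      exact ⟨hS.1.1, hS.2⟩
    have hcl := count_le A B hBA k i
    rw [hAB] at hcl
    exact le_trans (Finset.card_le_card hsub) hcl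
  have h1 : (F.card : ℝ) ≤ ∑ i ∈ I, (m.choose i : ℝ) * ((n-m).choose (k-i) : ℝ) := by
    rw [hfib]
    push_cast
    apply Finset.sum_le_sum
    intro i _
    exact_mod_cast hfibbd i
  have h2 : ∑ i ∈ I, (m.choose i : ℝ) * ((n-m).choose (k-i) : ℝ)
      ≤ ∑ i ∈ I, (m.choose i : ℝ) * ((n-m).choose (k-i) : ℝ) * Real.exp (γ * (t - i)) := by
    apply Finset.sum_le_sum
    intro i hi
    rw [hI] at hi
    simp only [Finset.mem_filter, Finset.mem_range] at hi
    have hit : (i:ℝ) < t := hi.2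
    have hone : (1:ℝ) ≤ Real.exp (γ * (t - i)) := by
      have hnn : 0 ≤ γ * (t - i) := mul_nonneg hγ0.le (by linarith)
      have := Real.add_one_le_exp (γ * (t - i))
      linarith
    have hc : (0:ℝ) ≤ (m.choose i : ℝ) * ((n-m).choose (k-i) : ℝ) := by positivity
    exact le_mul_of_one_le_right hc hone
  have h3 : ∑ i ∈ I, (m.choose i : ℝ) * ((n-m).choose (k-i) : ℝ) * Real.exp (γ * (t - i))
      ≤ ∑ i ∈ Finset.range (k+1),
          (m.choose i : ℝ) * ((n-m).choose (k-i) : ℝ) * Real.exp (γ * (t - i)) := by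
    apply Finset.sum_le_sum_of_subset_of_nonneg
    · rw [hI]; exact Finset.filter_subset _ _
    · intro i _ _
      positivity
  have h4 : ∑ i ∈ Finset.range (k+1),
        (m.choose i : ℝ) * ((n-m).choose (k-i) : ℝ) * Real.exp (γ * (t - i))
      = Real.exp (γ*t) * ∑ i ∈ Finset.range (k+1),
          (m.choose i : ℝ) * ((n-m).choose (k-i) : ℝ) * z ^ i := by
    rw [Finset.mul_sum]
    apply Finset.sum_congr rfl
    intro i _
    have he : Real.exp (γ * (t - (i:ℝ))) = Real.exp (γ*t) * z ^ i := by
      rw [hz, ← Real.exp_nat_mul, ← Real.exp_add]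
      congr 1
      ring
    rw [he]
    ring
  have h5 := key_genfun z hz0 hz1 n m k hmn
  set b : ℝ := (((n-m : ℕ):ℝ) + (m:ℝ)*z)/(n:ℝ) with hb
  have hbig : (F.card : ℝ) ≤ Real.exp (γ*t) * b ^ k * (n.choose k : ℝ) := by
    calc (F.card : ℝ) ≤ _ := h1
      _ ≤ _ := h2
      _ ≤ _ := h3
      _ = _ := h4
      _ ≤ Real.exp (γ*t) * ((n.choose k : ℝ) * b ^ k) :=
          mul_le_mul_of_nonneg_left h5 (Real.exp_pos _).le
      _ = Real.exp (γ*t) * b ^ k * (n.choose k : ℝ) := by ring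
  have hb0 : (0:ℝ) ≤ b := by
    rw [hb]
    have h1' : (0:ℝ) ≤ ((n-m : ℕ):ℝ) := Nat.cast_nonneg _
    have h2' : (0:ℝ) ≤ (m:ℝ) * z := mul_nonneg (Nat.cast_nonneg _) hz0
    apply div_nonneg (by linarith) (Nat.cast_nonneg _)
  have hzq : z < 1 - γ + γ^2/2 := by rw [hz]; exact exp_neg_lt_quadratic hγ0
  have hbp : b = 1 - p + p * z := by
    rw [hb, hp, Nat.cast_sub hmn]
    have hne : (n:ℝ) ≠ 0 := by positivity
    field_simp
  have hblt : b < Real.exp (p * (-γ + γ^2/2)) := by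
    have hble : 1 + p*(-γ+γ^2/2) ≤ Real.exp (p*(-γ+γ^2/2)) := by
      have := Real.add_one_le_exp (p*(-γ+γ^2/2))
      linarith
    have hlt : b < 1 + p*(-γ+γ^2/2) := by
      rw [hbp]
      nlinarith [hzq, hp0]
    linarith
  have hbk : b ^ k < Real.exp ((k:ℝ) * (p*(-γ+γ^2/2))) := by
    rw [Real.exp_nat_mul]
    exact pow_lt_pow_left₀ hblt hb0 (Nat.pos_iff_ne_zero.mp hk0)
  calc (F.card : ℝ)/(n.choose k : ℝ) ≤ Real.exp (γ*t) * b ^ k := by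
        rw [div_le_iff₀ hCpos]
        exact hbig
    _ < Real.exp (γ*t) * Real.exp ((k:ℝ)*(p*(-γ+γ^2/2))) :=
        mul_lt_mul_of_pos_left hbk (Real.exp_pos _)
    _ = Real.exp (-(γ^2 * p * ((k:ℝ)/2))) := by
        rw [← Real.exp_add, ht]
        congr 1
        ring
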